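/- For even n ≥ 4, m(n) ≤ (n+4) · 2^{n-3} + n · C(n-2, (n-2)/2)/2 + C(n, n/2)/2 + (n-2) · m(n-2). -/

import Mathlib

/-- A family of finsets is `n`-uniform if every hyperedge has `n` elements. -/
def IsUniform (n : ℕ) (E : Finset (Finset ℕ)) : Prop := ∀ e ∈ E, e.card = n

/-- A hypergraph (family of hyperedges) is 2-colorable if there is a Red/Blue
coloring of the vertices such that no hyperedge is monochromatic. -/
def Colorable2 (E : Finset (Finset ℕ)) : Prop :=
  ∃ χ : ℕ → Bool, ∀ e ∈ E, (∃ v ∈ e, χ v = true) ∧ (∃ v ∈ e, χ v = false)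

/-- `m n` is the least number of hyperedges in a non-2-colorable `n`-uniform hypergraph. -/
noncomputable def m (n : ℕ) : ℕ :=
  sInf {k | ∃ E : Finset (Finset ℕ), IsUniform n E ∧ ¬ Colorable2 E ∧ E.card = k}

/-- A hyperedge is monochromatic under `χ` if all its vertices get the same color. -/
def Mono (χ : ℕ → Bool) (s : Finset ℕ) : Prop :=
  (∀ x ∈ s, χ x = true) ∨ (∀ x ∈ s, χ x = false)

/-! ### Auxiliary combinatorial machinery -/

/-- Index-set predicate for the transversal gadget family. -/
def mpsP (d k : ℕ) : Prop :=
  2 * k = d ∨ (k % 2 = 0 ∧ d < 2 * k) ∨ (k % 2 = 1 ∧ 2 * k < d)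

instance mpsP.dec (d k : ℕ) : Decidable (mpsP d k) := by unfold mpsP; infer_instance

/-- The family of index sets used for transversal hyperedges. -/
def mpsR (d : ℕ) : Finset (Finset ℕ) :=
  (Finset.range d).powerset.filter (fun A => mpsP d A.card)

/-- Transversal hyperedge: pick `uf i` for `i ∈ A` and `vf i` for `i ∉ A`. -/
def mpsE (uf vf : ℕ → ℕ) (d : ℕ) (A : Finset ℕ) : Finset ℕ :=
  A.image uf ∪ ((Finset.range d) \ A).image vf

lemma mem_mpsR {d : ℕ} {A : Finset ℕ} :
    A ∈ mpsR d ↔ A ⊆ Finset.range d ∧ mpsP d A.card := by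
  simp [mpsR, Finset.mem_filter, Finset.mem_powerset]

lemma mps_alpha {d : ℕ} (hd : d % 2 = 0) {A : Finset ℕ} (hA : A ⊆ Finset.range d) :
    A ∈ mpsR d ∨ (Finset.range d \ A) ∈ mpsR d := by
  have hk : A.card ≤ d := by
    have := Finset.card_le_card hA
    simpa using this
  have hsub : Finset.range d \ A ⊆ Finset.range d := Finset.sdiff_subset
  have hcs : (Finset.range d \ A).card = d - A.card := by
    rw [Finset.card_sdiff_of_subset hA, Finset.card_range]
  have hkey : mpsP d A.card ∨ mpsP d (d - A.card) := by unfold mpsP; omega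
  rcases hkey with h | h
  · exact Or.inl (mem_mpsR.mpr ⟨hA, h⟩)
  · exact Or.inr (mem_mpsR.mpr ⟨hsub, by rw [hcs]; exact h⟩)

lemma mps_beta {d : ℕ} (hd : d % 2 = 0) {A : Finset ℕ} (hA : A ⊆ Finset.range d)
    {i : ℕ} (hi : i ∈ A) : A ∈ mpsR d ∨ A.erase i ∈ mpsR d := by
  have hk : A.card ≤ d := by
    have := Finset.card_le_card hA
    simpa using this
  have hkpos : 1 ≤ A.card := Finset.card_pos.mpr ⟨i, hi⟩
  have hce : (A.erase i).card = A.card - 1 := Finset.card_erase_of_mem hi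
  have hsub : A.erase i ⊆ Finset.range d := (Finset.erase_subset _ _).trans hA
  have hkey : mpsP d A.card ∨ mpsP d (A.card - 1) := by unfold mpsP; omega
  rcases hkey with h | h
  · exact Or.inl (mem_mpsR.mpr ⟨hA, h⟩)
  · exact Or.inr (mem_mpsR.mpr ⟨hsub, by rw [hce]; exact h⟩)

/-- Counting bound for the gadget family. -/
lemma card_mpsR {d : ℕ} (hd : d % 2 = 0) (hd1 : 1 ≤ d) :
    (mpsR d).card ≤ 2 ^ (d - 1) + Nat.choose d (d / 2) / 2 := by
  classical
  set P := (Finset.range d).powerset with hP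
  set slt := P.filter (fun A => 2 * A.card < d) with hslt
  set sge := P.filter (fun A => d ≤ 2 * A.card) with hsge
  set sgt := P.filter (fun A => d < 2 * A.card) with hsgt
  -- |sgt| = |slt|
  have hbij : sgt.card = slt.card := by
    apply Finset.card_bij' (fun A _ => Finset.range d \ A) (fun A _ => Finset.range d \ A)
    · intro A hA
      rw [hsgt, Finset.mem_filter, hP, Finset.mem_powerset] at hA
      rw [hslt, Finset.mem_filter, hP, Finset.mem_powerset]
      have hk : A.card ≤ d := by
        have := Finset.card_le_card hA.1
        simpa using this
      refine ⟨Finset.sdiff_subset, ?_⟩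
      rw [Finset.card_sdiff_of_subset hA.1, Finset.card_range]
      omega
    · intro A hA
      rw [hslt, Finset.mem_filter, hP, Finset.mem_powerset] at hA
      rw [hsgt, Finset.mem_filter, hP, Finset.mem_powerset]
      have hk : A.card ≤ d := by
        have := Finset.card_le_card hA.1
        simpa using this
      refine ⟨Finset.sdiff_subset, ?_⟩
      rw [Finset.card_sdiff_of_subset hA.1, Finset.card_range]
      omega
    · intro A hA
      rw [hsgt, Finset.mem_filter, hP, Finset.mem_powerset] at hA
      exact Finset.sdiff_sdiff_eq_self hA.1
    · intro A hA
      rw [hslt, Finset.mem_filter, hP, Finset.mem_powerset] at hA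
      exact Finset.sdiff_sdiff_eq_self hA.1
  -- sge splits into sgt and the middle layer
  have hsplit2 : sgt.card + Nat.choose d (d / 2) = sge.card := by
    have h1 : sge.filter (fun A => d < 2 * A.card) = sgt := by
      rw [hsge, hsgt, Finset.filter_filter]
      apply Finset.filter_congr
      intro A _
      constructor
      · rintro ⟨_, h⟩; exact h
      · intro h; exact ⟨le_of_lt h, h⟩
    have h2 : sge.filter (fun A => ¬ d < 2 * A.card) = P.filter (fun A => A.card = d / 2) := by
      rw [hsge, Finset.filter_filter]
      apply Finset.filter_congr
      intro A _
      constructor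
      · rintro ⟨h1', h2'⟩; omega
      · intro h; omega
    have h3 : (P.filter (fun A => A.card = d / 2)).card = Nat.choose d (d / 2) := by
      have : P.filter (fun A => A.card = d / 2) = Finset.powersetCard (d / 2) (Finset.range d) := by
        ext A
        simp [hP, Finset.mem_powersetCard, Finset.mem_filter, Finset.mem_powerset, and_comm]
      rw [this, Finset.card_powersetCard, Finset.card_range]
    have h4 := Finset.card_filter_add_card_filter_not
      (s := sge) (p := fun A => d < 2 * A.card)
    rw [h1, h2, h3] at h4
    omega
  -- all of P splits into sge and slt
  have hsplit1 : sge.card + slt.card = 2 ^ d := by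
    have h1 : P.filter (fun A => ¬ d ≤ 2 * A.card) = slt := by
      rw [hslt]
      apply Finset.filter_congr
      intro A _
      omega
    have h4 := Finset.card_filter_add_card_filter_not
      (s := P) (p := fun A => d ≤ 2 * A.card)
    rw [h1] at h4
    rw [← hsge] at h4
    have : P.card = 2 ^ d := by rw [hP, Finset.card_powerset, Finset.card_range]
    omega
  -- injection of mpsR into sge
  have hinj : (mpsR d).card ≤ sge.card := by
    apply Finset.card_le_card_of_injOn (fun A => if 2 * A.card < d then Finset.range d \ A else A)
    · intro A hA
      rw [Finset.mem_coe, mem_mpsR] at hA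
      have hk : A.card ≤ d := by
        have := Finset.card_le_card hA.1
        simpa using this
      by_cases h : 2 * A.card < d
      · simp only [h, if_true]
        rw [hsge, Finset.mem_coe, Finset.mem_filter, hP, Finset.mem_powerset]
        refine ⟨Finset.sdiff_subset, ?_⟩
        rw [Finset.card_sdiff_of_subset hA.1, Finset.card_range]
        omega
      · simp only [h, if_false]
        rw [hsge, Finset.mem_coe, Finset.mem_filter, hP, Finset.mem_powerset]
        exact ⟨hA.1, by omega⟩
    · intro a ha b hb hab
      rw [Finset.mem_coe, mem_mpsR] at ha hb
      have hka : a.card ≤ d := by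
        have := Finset.card_le_card ha.1
        simpa using this
      have hkb : b.card ≤ d := by
        have := Finset.card_le_card hb.1
        simpa using this
      by_cases h1 : 2 * a.card < d <;> by_cases h2 : 2 * b.card < d
      · simp only [h1, h2, if_true] at hab
        have := congrArg (fun S => Finset.range d \ S) hab
        simpa [Finset.sdiff_sdiff_eq_self ha.1, Finset.sdiff_sdiff_eq_self hb.1] using this
      · simp only [h1, h2, if_true, if_false] at hab
        -- range d \ a = b, with 2|a| < d and 2|b| ≥ d
        exfalso
        have hbc : b.card = d - a.card := by
          rw [← hab, Finset.card_sdiff_of_subset ha.1, Finset.card_range]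
        have hpa : mpsP d a.card := ha.2
        have hpb : mpsP d b.card := hb.2
        unfold mpsP at hpa hpb
        omega
      · simp only [h1, h2, if_true, if_false] at hab
        exfalso
        have hac : a.card = d - b.card := by
          rw [hab, Finset.card_sdiff_of_subset hb.1, Finset.card_range]
        have hpa : mpsP d a.card := ha.2
        have hpb : mpsP d b.card := hb.2
        unfold mpsP at hpa hpb
        omega
      · simpa [h1, h2] using hab
  have hpow : 2 ^ d = 2 * 2 ^ (d - 1) := by
    cases d with
    | zero => omega
    | succ k => rw [pow_succ]; simp; ring
  omega

/-- The gadget lemma: if no pair is colored `c`-`c`, then some transversal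
hyperedge from the family is monochromatic. -/
lemma mps_gadget {d : ℕ} (hd : d % 2 = 0) (uf vf : ℕ → ℕ) (χ : ℕ → Bool) (c : Bool)
    (h : ∀ i < d, ¬(χ (uf i) = c ∧ χ (vf i) = c)) :
    ∃ A ∈ mpsR d, ∃ b : Bool, ∀ x ∈ mpsE uf vf d A, χ x = b := by
  classical
  by_cases h1 : ∃ i, i < d ∧ χ (uf i) = !c ∧ χ (vf i) = !c
  · obtain ⟨i₀, hi₀d, hu₀, hv₀⟩ := h1
    set A := (Finset.range d).filter (fun i => χ (uf i) = !c) with hAdef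
    have hAsub : A ⊆ Finset.range d := Finset.filter_subset _ _
    have hiA : i₀ ∈ A := by
      rw [hAdef, Finset.mem_filter]
      exact ⟨Finset.mem_range.mpr hi₀d, hu₀⟩
    have key : ∀ i, i < d → i ∉ A → χ (vf i) = !c := by
      intro i hid hiA'
      have hu : χ (uf i) = c := by
        have hne : ¬ χ (uf i) = !c := by
          intro hcon
          exact hiA' (by rw [hAdef, Finset.mem_filter]; exact ⟨Finset.mem_range.mpr hid, hcon⟩)
        cases hc : χ (uf i) <;> cases c <;> simp_all
      have h2 := h i hid
      cases hc : χ (vf i) <;> cases c <;> simp_all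
    rcases mps_beta hd hAsub hiA with hR | hR
    · refine ⟨A, hR, !c, ?_⟩
      intro x hx
      rcases Finset.mem_union.mp hx with hx | hx
      · obtain ⟨i, hi, rfl⟩ := Finset.mem_image.mp hx
        exact (Finset.mem_filter.mp hi).2
      · obtain ⟨i, hi, rfl⟩ := Finset.mem_image.mp hx
        obtain ⟨hir, hiA'⟩ := Finset.mem_sdiff.mp hi
        exact key i (Finset.mem_range.mp hir) hiA'
    · refine ⟨A.erase i₀, hR, !c, ?_⟩
      intro x hx
      rcases Finset.mem_union.mp hx with hx | hx
      · obtain ⟨i, hi, rfl⟩ := Finset.mem_image.mp hx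
        exact (Finset.mem_filter.mp (Finset.mem_of_mem_erase hi)).2
      · obtain ⟨i, hi, rfl⟩ := Finset.mem_image.mp hx
        obtain ⟨hir, hiA'⟩ := Finset.mem_sdiff.mp hi
        by_cases hii : i = i₀
        · subst hii; exact hv₀
        · have hnA : i ∉ A := fun hiA'' => hiA' (Finset.mem_erase.mpr ⟨hii, hiA''⟩)
          exact key i (Finset.mem_range.mp hir) hnA
  · push_neg at h1
    have hmix : ∀ i, i < d → χ (vf i) = ! χ (uf i) := by
      intro i hid
      have h2 := h i hid
      have h3 := h1 i hid
      cases hu : χ (uf i) <;> cases hv : χ (vf i) <;> cases c <;> simp_all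
    set A := (Finset.range d).filter (fun i => χ (uf i) = false) with hAdef
    have hAsub : A ⊆ Finset.range d := Finset.filter_subset _ _
    rcases mps_alpha hd hAsub with hR | hR
    · refine ⟨A, hR, false, ?_⟩
      intro x hx
      rcases Finset.mem_union.mp hx with hx | hx
      · obtain ⟨i, hi, rfl⟩ := Finset.mem_image.mp hx
        exact (Finset.mem_filter.mp hi).2
      · obtain ⟨i, hi, rfl⟩ := Finset.mem_image.mp hx
        obtain ⟨hir, hiA'⟩ := Finset.mem_sdiff.mp hi
        have hid := Finset.mem_range.mp hir
        have hu : χ (uf i) = true := by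
          have hne : ¬ χ (uf i) = false := by
            intro hcon
            exact hiA' (by rw [hAdef, Finset.mem_filter]; exact ⟨hir, hcon⟩)
          cases hc : χ (uf i) <;> simp_all
        rw [hmix i hid, hu]
        rfl
    · refine ⟨Finset.range d \ A, hR, true, ?_⟩
      intro x hx
      rcases Finset.mem_union.mp hx with hx | hx
      · obtain ⟨i, hi, rfl⟩ := Finset.mem_image.mp hx
        obtain ⟨hir, hiA'⟩ := Finset.mem_sdiff.mp hi
        have hne : ¬ χ (uf i) = false := by
          intro hcon
          exact hiA' (by rw [hAdef, Finset.mem_filter]; exact ⟨hir, hcon⟩)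
        cases hc : χ (uf i) <;> simp_all
      · obtain ⟨i, hi, rfl⟩ := Finset.mem_image.mp hx
        obtain ⟨hir, hiA'⟩ := Finset.mem_sdiff.mp hi
        have hid := Finset.mem_range.mp hir
        have hiA : i ∈ A := by
          by_contra hcon
          exact hiA' (Finset.mem_sdiff.mpr ⟨hir, hcon⟩)
        have hu : χ (uf i) = false := (Finset.mem_filter.mp hiA).2
        rw [hmix i hid, hu]
        rfl

/-- Cardinality of a transversal hyperedge. -/
lemma card_mpsE {C₁ C₂ d : ℕ} (hC : C₁ + d ≤ C₂) {A : Finset ℕ} (hA : A ⊆ Finset.range d) :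
    (mpsE (fun i => C₁ + i) (fun i => C₂ + i) d A).card = d := by
  have hk : A.card ≤ d := by
    have := Finset.card_le_card hA
    simpa using this
  have hinj1 : Function.Injective (fun i : ℕ => C₁ + i) := fun a b hab => by
    have : C₁ + a = C₁ + b := hab
    omega
  have hinj2 : Function.Injective (fun i : ℕ => C₂ + i) := fun a b hab => by
    have : C₂ + a = C₂ + b := hab
    omega
  have hdisj : Disjoint (A.image (fun i => C₁ + i))
      (((Finset.range d) \ A).image (fun i => C₂ + i)) := by
    rw [Finset.disjoint_left]
    rintro x hx hy
    obtain ⟨i, hi, rfl⟩ := Finset.mem_image.mp hx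
    obtain ⟨j, hj, hji⟩ := Finset.mem_image.mp hy
    have hi' : i < d := Finset.mem_range.mp (hA hi)
    have : C₂ + j = C₁ + i := hji
    omega
  rw [mpsE, Finset.card_union_of_disjoint hdisj, Finset.card_image_of_injective _ hinj1,
      Finset.card_image_of_injective _ hinj2, Finset.card_sdiff_of_subset hA, Finset.card_range]
  omega

/-- Elements of a transversal hyperedge are bounded below and above. -/
lemma mpsE_range {C₁ C₂ d : ℕ} (hC : C₁ ≤ C₂) {A : Finset ℕ} (hA : A ⊆ Finset.range d) {x : ℕ}
    (hx : x ∈ mpsE (fun i => C₁ + i) (fun i => C₂ + i) d A) : C₁ ≤ x ∧ x < C₂ + d := by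
  rcases Finset.mem_union.mp hx with hx | hx
  · obtain ⟨i, hi, rfl⟩ := Finset.mem_image.mp hx
    have : i < d := Finset.mem_range.mp (hA hi)
    omega
  · obtain ⟨i, hi, rfl⟩ := Finset.mem_image.mp hx
    have : i < d := Finset.mem_range.mp ((Finset.mem_sdiff.mp hi).1)
    omega

/-- Existence of a non-2-colorable k-uniform hypergraph (complete hypergraph on 2k-1 vertices). -/
lemma exists_non2col (k : ℕ) (hk : 1 ≤ k) :
    ∃ E : Finset (Finset ℕ), IsUniform k E ∧ ¬ Colorable2 E := by
  classical
  refine ⟨Finset.powersetCard k (Finset.range (2 * k - 1)), ?_, ?_⟩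
  · intro e he
    exact (Finset.mem_powersetCard.mp he).2
  · rintro ⟨χ, hχ⟩
    set T := (Finset.range (2 * k - 1)).filter (fun v => χ v = true) with hT
    have hTF : T.card + ((Finset.range (2 * k - 1)).filter (fun v => ¬ χ v = true)).card
        = 2 * k - 1 := by
      have h0 := Finset.card_filter_add_card_filter_not
        (s := Finset.range (2 * k - 1)) (p := fun v => χ v = true)
      rw [Finset.card_range] at h0
      simpa [hT] using h0
    by_cases hTk : k ≤ T.card
    · obtain ⟨S, hS, hScard⟩ := Finset.exists_subset_card_eq hTk
      have hSmem : S ∈ Finset.powersetCard k (Finset.range (2 * k - 1)) := by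
        rw [Finset.mem_powersetCard]
        exact ⟨hS.trans (Finset.filter_subset _ _), hScard⟩
      obtain ⟨_, ⟨v, hv, hvf⟩⟩ := hχ S hSmem
      have : χ v = true := (Finset.mem_filter.mp (hS hv)).2
      simp_all
    · have hFk : k ≤ ((Finset.range (2 * k - 1)).filter (fun v => ¬ χ v = true)).card := by
        omega
      obtain ⟨S, hS, hScard⟩ := Finset.exists_subset_card_eq hFk
      have hSmem : S ∈ Finset.powersetCard k (Finset.range (2 * k - 1)) := by
        rw [Finset.mem_powersetCard]
        exact ⟨hS.trans (Finset.filter_subset _ _), hScard⟩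
      obtain ⟨⟨v, hv, hvt⟩, _⟩ := hχ S hSmem
      have : ¬ χ v = true := (Finset.mem_filter.mp (hS hv)).2
      simp_all

/-- Second improved recurrence (even case): for even `n ≥ 4`,
`m n ≤ (n+4)·2^(n-3) + n·C(n-2,(n-2)/2)/2 + C(n,n/2)/2 + (n-2)·m(n-2)`. -/
theorem second_improvement_even (n : ℕ) (hn : 4 ≤ n) (heven : Even n) :
    m n ≤ (n + 4) * 2 ^ (n - 3) + n * (Nat.choose (n - 2) ((n - 2) / 2) / 2)
      + Nat.choose n (n / 2) / 2 + (n - 2) * m (n - 2) := by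
  classical
  have hn2 : n % 2 = 0 := Nat.even_iff.mp heven
  set d := n - 2 with hddef
  have hd2 : d % 2 = 0 := by omega
  have hd1 : 1 ≤ d := by omega
  -- core witness
  have hne : {k | ∃ E : Finset (Finset ℕ), IsUniform d E ∧ ¬ Colorable2 E ∧ E.card = k}.Nonempty := by
    obtain ⟨E, h1, h2⟩ := exists_non2col d hd1
    exact ⟨E.card, E, h1, h2, rfl⟩
  have hmem : m d ∈ {k | ∃ E : Finset (Finset ℕ), IsUniform d E ∧ ¬ Colorable2 E ∧ E.card = k} :=
    Nat.sInf_mem hne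
  obtain ⟨E₀, hu₀, hnc₀, hcard₀⟩ := hmem
  set B := (E₀.sup (fun e => e.sup id)) + 1 with hBdef
  have hB : ∀ e ∈ E₀, ∀ x ∈ e, x < B := by
    intro e he x hx
    have h1 : e.sup id ≤ E₀.sup (fun e => e.sup id) := Finset.le_sup he
    have h2 : x ≤ e.sup id := Finset.le_sup (f := id) hx
    omega
  set uf' : ℕ → ℕ := fun i => B + i with hufdef'
  set vf' : ℕ → ℕ := fun i => (B + d) + i with hvfdef'
  set uf : ℕ → ℕ := fun j => (B + 2 * d) + j with hufdef
  set vf : ℕ → ℕ := fun j => (B + 2 * d + n) + j with hvfdef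
  set famA := E₀.biUnion (fun e => (Finset.range d).image (fun i => e ∪ {uf' i, vf' i}))
    with hfamA
  set famB := (mpsR d).biUnion
      (fun A => (Finset.range n).image (fun j => mpsE uf' vf' d A ∪ {uf j, vf j})) with hfamB
  set famC := (mpsR n).image (fun A => mpsE uf vf n A) with hfamC
  set Efin := famA ∪ famB ∪ famC with hEfin
  -- cardinality of mpsE over the primed pairs
  have hE'card : ∀ A ∈ mpsR d, (mpsE uf' vf' d A).card = d := by
    intro A hA
    exact card_mpsE (by omega) (mem_mpsR.mp hA).1
  have hEcard2 : ∀ A ∈ mpsR n, (mpsE uf vf n A).card = n := by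
    intro A hA
    exact card_mpsE (by omega) (mem_mpsR.mp hA).1
  -- uniformity
  have hunif : IsUniform n Efin := by
    intro S hS
    rcases Finset.mem_union.mp hS with hS | hS
    · rcases Finset.mem_union.mp hS with hS | hS
      · -- famA
        obtain ⟨e, he, hS'⟩ := Finset.mem_biUnion.mp hS
        obtain ⟨i, hi, rfl⟩ := Finset.mem_image.mp hS'
        have hi' := Finset.mem_range.mp hi
        have hcp : ({uf' i, vf' i} : Finset ℕ).card = 2 := by
          rw [Finset.card_insert_of_notMem, Finset.card_singleton]
          simp only [Finset.mem_singleton, hufdef', hvfdef']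
          omega
        have hdisj : Disjoint e ({uf' i, vf' i} : Finset ℕ) := by
          rw [Finset.disjoint_right]
          intro x hx hxe
          have hxB := hB e he x hxe
          have : x = uf' i ∨ x = vf' i := by simpa using hx
          rcases this with rfl | rfl <;> simp only [hufdef', hvfdef'] at hxB <;> omega
        rw [Finset.card_union_of_disjoint hdisj, hu₀ e he, hcp]
        omega
      · -- famB
        obtain ⟨A, hA, hS'⟩ := Finset.mem_biUnion.mp hS
        obtain ⟨j, hj, rfl⟩ := Finset.mem_image.mp hS'
        have hj' := Finset.mem_range.mp hj
        have hcp : ({uf j, vf j} : Finset ℕ).card = 2 := by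
          rw [Finset.card_insert_of_notMem, Finset.card_singleton]
          simp only [Finset.mem_singleton, hufdef, hvfdef]
          omega
        have hdisj : Disjoint (mpsE uf' vf' d A) ({uf j, vf j} : Finset ℕ) := by
          rw [Finset.disjoint_right]
          intro x hx hxe
          have hxr := mpsE_range (by omega : B ≤ B + d) (mem_mpsR.mp hA).1 hxe
          have : x = uf j ∨ x = vf j := by simpa using hx
          rcases this with rfl | rfl <;> simp only [hufdef, hvfdef] at hxr <;> omega
        rw [Finset.card_union_of_disjoint hdisj, hE'card A hA, hcp]
        omega
      -- famC
    · obtain ⟨A, hA, rfl⟩ := Finset.mem_image.mp hS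
      exact hEcard2 A hA
  -- non-2-colorability
  have hnc : ¬ Colorable2 Efin := by
    rintro ⟨χ, hχ⟩
    have hmono_false : ∀ S ∈ Efin, ∀ b : Bool, ¬ (∀ x ∈ S, χ x = b) := by
      intro S hS b hall
      obtain ⟨⟨v₁, hv₁, hv₁t⟩, ⟨v₂, hv₂, hv₂f⟩⟩ := hχ S hS
      have e1 := hall v₁ hv₁
      have e2 := hall v₂ hv₂
      cases b
      · rw [e1] at hv₁t; exact Bool.noConfusion hv₁t
      · rw [e2] at hv₂f; exact Bool.noConfusion hv₂f
    -- a monochromatic core edge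
    obtain ⟨e₀, he₀, c₀, hc₀⟩ : ∃ e ∈ E₀, ∃ b : Bool, ∀ x ∈ e, χ x = b := by
      by_contra hcon
      push_neg at hcon
      apply hnc₀
      refine ⟨χ, fun e he => ?_⟩
      obtain ⟨x, hx, hxne⟩ := hcon e he true
      obtain ⟨y, hy, hyne⟩ := hcon e he false
      refine ⟨⟨y, hy, ?_⟩, ⟨x, hx, ?_⟩⟩
      · cases hcy : χ y
        · exact absurd hcy hyne
        · rfl
      · cases hcx : χ x
        · rfl
        · exact absurd hcx hxne
    -- level 1: no primed pair is c₀-c₀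
    have hno1 : ∀ i < d, ¬ (χ (uf' i) = c₀ ∧ χ (vf' i) = c₀) := by
      rintro i hi ⟨hui, hvi⟩
      have hSmem : e₀ ∪ {uf' i, vf' i} ∈ Efin := by
        apply Finset.mem_union_left
        apply Finset.mem_union_left
        exact Finset.mem_biUnion.mpr ⟨e₀, he₀,
          Finset.mem_image.mpr ⟨i, Finset.mem_range.mpr hi, rfl⟩⟩
      refine hmono_false _ hSmem c₀ ?_
      intro x hx
      rcases Finset.mem_union.mp hx with hx | hx
      · exact hc₀ x hx
      · have : x = uf' i ∨ x = vf' i := by simpa using hx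
        rcases this with rfl | rfl <;> assumption
    obtain ⟨A₁, hA₁, c₁, hc₁⟩ := mps_gadget hd2 uf' vf' χ c₀ hno1
    -- level 2: no unprimed pair is c₁-c₁
    have hno2 : ∀ j < n, ¬ (χ (uf j) = c₁ ∧ χ (vf j) = c₁) := by
      rintro j hj ⟨huj, hvj⟩
      have hSmem : mpsE uf' vf' d A₁ ∪ {uf j, vf j} ∈ Efin := by
        apply Finset.mem_union_left
        apply Finset.mem_union_right
        exact Finset.mem_biUnion.mpr ⟨A₁, hA₁,
          Finset.mem_image.mpr ⟨j, Finset.mem_range.mpr hj, rfl⟩⟩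
      refine hmono_false _ hSmem c₁ ?_
      intro x hx
      rcases Finset.mem_union.mp hx with hx | hx
      · exact hc₁ x hx
      · have : x = uf j ∨ x = vf j := by simpa using hx
        rcases this with rfl | rfl <;> assumption
    obtain ⟨A₂, hA₂, c₂, hc₂⟩ := mps_gadget hn2 uf vf χ c₁ hno2
    have hSmem : mpsE uf vf n A₂ ∈ Efin := by
      apply Finset.mem_union_right
      exact Finset.mem_image.mpr ⟨A₂, hA₂, rfl⟩
    exact hmono_false _ hSmem c₂ hc₂
  -- cardinality bounds
  have hcardA : famA.card ≤ E₀.card * d := by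
    refine le_trans Finset.card_biUnion_le ?_
    calc ∑ e ∈ E₀, ((Finset.range d).image (fun i => e ∪ {uf' i, vf' i})).card
        ≤ ∑ _e ∈ E₀, d := by
          apply Finset.sum_le_sum
          intro e _
          exact le_trans Finset.card_image_le (by rw [Finset.card_range])
      _ = E₀.card * d := by rw [Finset.sum_const, smul_eq_mul]
  have hcardB : famB.card ≤ (mpsR d).card * n := by
    refine le_trans Finset.card_biUnion_le ?_
    calc ∑ A ∈ mpsR d, ((Finset.range n).image (fun j => mpsE uf' vf' d A ∪ {uf j, vf j})).card
        ≤ ∑ _A ∈ mpsR d, n := by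
          apply Finset.sum_le_sum
          intro A _
          exact le_trans Finset.card_image_le (by rw [Finset.card_range])
      _ = (mpsR d).card * n := by rw [Finset.sum_const, smul_eq_mul]
  have hcardC : famC.card ≤ (mpsR n).card := Finset.card_image_le
  have hEcard : Efin.card ≤ E₀.card * d + (mpsR d).card * n + (mpsR n).card := by
    calc Efin.card ≤ (famA ∪ famB).card + famC.card := Finset.card_union_le _ _
      _ ≤ famA.card + famB.card + famC.card := by
          have := Finset.card_union_le famA famB
          omega
      _ ≤ E₀.card * d + (mpsR d).card * n + (mpsR n).card := by
          omega
  have hmle : m n ≤ Efin.card := Nat.sInf_le ⟨Efin, hunif, hnc, rfl⟩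
  have hR1 := card_mpsR hd2 hd1
  have hR2 := card_mpsR hn2 (by omega : 1 ≤ n)
  have hR1' : (mpsR d).card ≤ 2 ^ (n - 3) + Nat.choose d (d / 2) / 2 := by
    have e1 : d - 1 = n - 3 := by omega
    rw [← e1]
    exact hR1
  have hpow : 2 ^ (n - 1) = 4 * 2 ^ (n - 3) := by
    rw [show n - 1 = (n - 3) + 2 by omega, pow_add]
    ring
  calc m n ≤ Efin.card := hmle
    _ ≤ E₀.card * d + (mpsR d).card * n + (mpsR n).card := hEcard
    _ ≤ m d * d + (2 ^ (n - 3) + Nat.choose d (d / 2) / 2) * n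
        + (2 ^ (n - 1) + Nat.choose n (n / 2) / 2) := by
        have hb1 := Nat.mul_le_mul_right n hR1'
        rw [hcard₀]
        omega
    _ = (n + 4) * 2 ^ (n - 3) + n * (Nat.choose d (d / 2) / 2)
        + Nat.choose n (n / 2) / 2 + d * m d := by
        rw [hpow]
        ring
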